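/- Let H be an r-uniform hypergraph admitting a weighted incidence matrix B with B(v,e) ≥ 0, B(v,e)=0 when v∉e, such that ∑_{e: v∈e} B(v,e) ≤ 1 for every vertex v, and ∏_{v∈e} B(v,e) ≥ α > 0 for every edge e. Then ρ(H) ≤ (r−1)!·α^{−1/r}. -/

import Mathlib

open Finset

/-- Spectral radius of an `r`-uniform hypergraph with edge set `E`. -/
noncomputable def specRad (r : ℕ) {V : Type} [Fintype V] (E : Finset (Finset V)) : ℝ :=
  sSup {ρ : ℝ | ∃ x : V → ℝ, (∀ v, 0 ≤ x v) ∧ x ≠ 0 ∧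
    ρ = (Nat.factorial r : ℝ) * (∑ e ∈ E, ∏ v ∈ e, x v) / (∑ v, x v ^ r)}

/-- an α-subnormal weighted incidence matrix bounds the spectral radius
by `(r-1)! * α^(-1/r)`. -/
theorem specRad_le_of_subnormal (r n : ℕ) (hr : 1 ≤ r)
    (E : Finset (Finset (Fin n))) (hunif : ∀ e ∈ E, e.card = r)
    (B : Fin n → Finset (Fin n) → ℝ)
    (hBnn : ∀ v e, 0 ≤ B v e)
    (hBzero : ∀ v e, v ∉ e → B v e = 0)
    (α : ℝ) (hα : 0 < α)
    (hsum : ∀ v, ∑ e ∈ E.filter (fun e => v ∈ e), B v e ≤ 1)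
    (hprod : ∀ e ∈ E, α ≤ ∏ v ∈ e, B v e) :
    specRad r E ≤ (Nat.factorial (r - 1) : ℝ) * α ^ (-(1 : ℝ) / r) := by
  have hr0 : (0:ℝ) < r := by exact_mod_cast hr
  set c : ℝ := α ^ (-(1:ℝ)/r) with hc
  have hc0 : 0 < c := Real.rpow_pos_of_pos hα _
  apply Real.sSup_le
  · rintro ρ ⟨x, hx0, hxne, rfl⟩
    obtain ⟨v0, hv0⟩ := Function.ne_iff.mp hxne
    have hT : 0 < ∑ v, x v ^ r := by
      apply Finset.sum_pos' (fun v _ => pow_nonneg (hx0 v) r)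
      exact ⟨v0, Finset.mem_univ _, pow_pos (lt_of_le_of_ne (hx0 v0) (Ne.symm hv0)) r⟩
    -- per-edge inequality
    have key : ∀ e ∈ E, (r:ℝ) * ∏ v ∈ e, x v ≤ c * ∑ v ∈ e, B v e * x v ^ r := by
      intro e he
      have hcard : (e.card : ℝ) = r := by exact_mod_cast hunif e he
      have amgm : ∏ v ∈ e, (B v e * x v ^ r) ^ ((1:ℝ)/r) ≤ ∑ v ∈ e, (1/r) * (B v e * x v ^ r) :=
        Real.geom_mean_le_arith_mean_weighted e _ _ (fun i _ => by positivity)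
          (by rw [Finset.sum_const, hunif e he, nsmul_eq_mul]; field_simp)
          (fun i _ => by have := hBnn i e; have := hx0 i; positivity)
      have hsplit : ∀ v ∈ e, (B v e * x v ^ r) ^ ((1:ℝ)/r)
          = B v e ^ ((1:ℝ)/r) * x v := by
        intro v _
        rw [Real.mul_rpow (hBnn v e) (pow_nonneg (hx0 v) r), ← Real.rpow_natCast (x v) r,
          ← Real.rpow_mul (hx0 v)]
        rw [mul_one_div, div_self (ne_of_gt hr0), Real.rpow_one]
      rw [Finset.prod_congr rfl hsplit, Finset.prod_mul_distrib] at amgm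
      have hαle : α ^ ((1:ℝ)/r) ≤ ∏ v ∈ e, B v e ^ ((1:ℝ)/r) := by
        rw [Real.finset_prod_rpow e _ (fun v _ => hBnn v e)]
        exact Real.rpow_le_rpow (le_of_lt hα) (hprod e he) (by positivity)
      have hxnn : 0 ≤ ∏ v ∈ e, x v := Finset.prod_nonneg (fun v _ => hx0 v)
      have h2 : α ^ ((1:ℝ)/r) * ∏ v ∈ e, x v ≤ ∑ v ∈ e, (1/r) * (B v e * x v ^ r) :=
        le_trans (mul_le_mul_of_nonneg_right hαle hxnn) amgm
      have hpos : (0:ℝ) < α ^ ((1:ℝ)/r) := Real.rpow_pos_of_pos hα _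
      have hcα : c * α ^ ((1:ℝ)/r) = 1 := by
        rw [hc, ← Real.rpow_add hα]; ring_nf; exact Real.rpow_zero α
      calc (r:ℝ) * ∏ v ∈ e, x v
          = (r * c) * (α ^ ((1:ℝ)/r) * ∏ v ∈ e, x v) := by
            rw [← mul_assoc, mul_assoc (r:ℝ) c, hcα]; ring
        _ ≤ (r * c) * ∑ v ∈ e, (1/r) * (B v e * x v ^ r) := by
            apply mul_le_mul_of_nonneg_left h2 (by positivity)
        _ = c * ∑ v ∈ e, B v e * x v ^ r := by
            rw [← Finset.mul_sum]; field_simp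
    have hsum2 : (r:ℝ) * ∑ e ∈ E, ∏ v ∈ e, x v ≤ c * ∑ v, x v ^ r := by
      have h3 : (r:ℝ) * ∑ e ∈ E, ∏ v ∈ e, x v ≤ c * ∑ e ∈ E, ∑ v ∈ e, B v e * x v ^ r := by
        rw [Finset.mul_sum, Finset.mul_sum]
        exact Finset.sum_le_sum key
      have hswap : ∑ e ∈ E, ∑ v ∈ e, B v e * x v ^ r
          = ∑ v, (∑ e ∈ E.filter (fun e => v ∈ e), B v e) * x v ^ r := by
        simp_rw [Finset.sum_mul, Finset.sum_filter]
        rw [Finset.sum_comm]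
        refine Finset.sum_congr rfl fun e _ => ?_
        simp [Finset.sum_ite_mem]
      refine h3.trans ?_
      rw [hswap]
      apply mul_le_mul_of_nonneg_left _ (le_of_lt hc0)
      apply Finset.sum_le_sum
      intro v _
      have := hsum v
      nlinarith [pow_nonneg (hx0 v) r, hsum v]
    rw [div_le_iff₀ hT]
    have hfac : (Nat.factorial r : ℝ) = (r : ℝ) * (Nat.factorial (r-1) : ℝ) := by
      exact_mod_cast (Nat.mul_factorial_pred (by omega)).symm
    rw [hfac]
    calc (r : ℝ) * (Nat.factorial (r-1) : ℝ) * (∑ e ∈ E, ∏ v ∈ e, x v)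
        = (Nat.factorial (r-1) : ℝ) * ((r:ℝ) * ∑ e ∈ E, ∏ v ∈ e, x v) := by ring
      _ ≤ (Nat.factorial (r-1) : ℝ) * (c * ∑ v, x v ^ r) := by
          apply mul_le_mul_of_nonneg_left hsum2 (by positivity)
      _ = (Nat.factorial (r-1) : ℝ) * c * ∑ v, x v ^ r := by ring
  · positivity
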